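/- arXiv:2506.03047 — 7 statements merged into one kernel-verified Lean document; each statement's English description precedes it below -/
import Mathlib

section
/- Let α ∈ (0,1), δ = 1−α, and c_α = (α/δ)^α. Set c₁ = c_α/(c_α+1) and c₂ = max(1, α/δ). Then for all y > 0: c₁·(y^(−α)+1) ≤ [1−(y+1)^(−δ/α)]^(−α) ≤ c₂·(y^(−α)+1). -/
open Real

private lemma aux_sub (x a : ℝ) (hx : 0 < x) (ha : 0 < a) (ha1 : a ≤ 1) :
    (1 + x) ^ a ≤ 1 + x ^ a := by
  have h1 : (0:ℝ) < 1 + x := by linarith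
  have h2 : (1 + x) ^ a = (1 + x) ^ (a - 1) * (1 + x) := by
    rw [← Real.rpow_add_one h1.ne' (a - 1)]; ring_nf
  have h3 : (1 + x) ^ (a - 1) ≤ 1 :=
    Real.rpow_le_one_of_one_le_of_nonpos (by linarith) (by linarith)
  have h4 : (1 + x) ^ (a - 1) ≤ x ^ (a - 1) :=
    Real.rpow_le_rpow_of_nonpos hx (by linarith) (by linarith)
  have h5 : x ^ (a - 1) * x = x ^ a := by
    rw [← Real.rpow_add_one hx.ne' (a - 1)]; ring_nf
  calc (1 + x) ^ a = (1 + x) ^ (a - 1) * 1 + (1 + x) ^ (a - 1) * x := by rw [h2]; ring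
    _ ≤ 1 * 1 + x ^ (a - 1) * x := by gcongr
    _ = 1 + x ^ a := by rw [h5]; ring

/-- Bernoulli for negative exponents: `(1+x)^(-b) ≥ 1 - b*x` for `x, b > 0`. -/
private lemma aux_bern (x b : ℝ) (hx : 0 < x) (hb : 0 < b) :
    1 - b * x ≤ (1 + x) ^ (-b) := by
  have h1 : (0:ℝ) < 1 + x := by linarith
  have hpos : 0 < (1 + x) ^ (-b) := Real.rpow_pos_of_pos h1 _
  rcases le_or_gt 1 (b * x) with h | h
  · linarith
  rcases le_or_gt b 1 with hb1 | hb1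
  · have h2 : (1 + x) ^ b ≤ 1 + b * x :=
      rpow_one_add_le_one_add_mul_self (by linarith) hb.le hb1
    have h4 : (0:ℝ) < (1 + x) ^ b := Real.rpow_pos_of_pos h1 _
    rw [Real.rpow_neg h1.le, inv_eq_one_div, le_div_iff₀ h4]
    nlinarith [mul_le_mul_of_nonneg_left h2 (by linarith : (0:ℝ) ≤ 1 - b * x), sq_nonneg (b * x)]
  · have hs : (-1:ℝ) ≤ -x / (1 + x) := by
      rw [neg_div, neg_le_neg_iff, div_le_one h1]; linarith
    have h2 : 1 + b * (-x / (1 + x)) ≤ (1 + -x / (1 + x)) ^ b :=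
      one_add_mul_self_le_rpow_one_add hs hb1.le
    have h3 : 1 + -x / (1 + x) = (1 + x)⁻¹ := by field_simp; ring
    have h4 : ((1 + x)⁻¹ : ℝ) ^ b = (1 + x) ^ (-b) := by
      rw [Real.inv_rpow h1.le, ← Real.rpow_neg h1.le]
    have h5 : -x ≤ -x / (1 + x) := by
      rw [neg_div, neg_le_neg_iff, div_le_iff₀ h1]; nlinarith
    have h6 : 1 + b * (-x) ≤ 1 + b * (-x / (1 + x)) := by
      have := mul_le_mul_of_nonneg_left h5 hb.le; linarith
    calc 1 - b * x = 1 + b * (-x) := by ring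
      _ ≤ 1 + b * (-x / (1 + x)) := h6
      _ ≤ (1 + -x / (1 + x)) ^ b := h2
      _ = (1 + x) ^ (-b) := by rw [h3, h4]

/-- With `c_α = (α/δ)^α`, `c₁ = c_α/(c_α+1)`, `c₂ = max 1 (α/δ)`:
`c₁·(y^(−α)+1) ≤ (1−(y+1)^(−δ/α))^(−α) ≤ c₂·(y^(−α)+1)` for `y > 0`. -/
theorem stmt1 (α : ℝ) (hα : 0 < α) (hα1 : α < 1) (y : ℝ) (hy : 0 < y) :
    ((α / (1 - α)) ^ α / ((α / (1 - α)) ^ α + 1)) * (y ^ (-α) + 1) ≤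
        (1 - (y + 1) ^ (-((1 - α) / α))) ^ (-α) ∧
      (1 - (y + 1) ^ (-((1 - α) / α))) ^ (-α) ≤
        max 1 (α / (1 - α)) * (y ^ (-α) + 1) := by
  have hδ : (0:ℝ) < 1 - α := by linarith
  set β : ℝ := (1 - α) / α with hβdef
  have hβ : 0 < β := div_pos hδ hα
  set D : ℝ := α / (1 - α) with hDdef
  have hD : 0 < D := div_pos hα hδ
  have hβD : β⁻¹ = D := by rw [hβdef, hDdef, inv_div]
  have h1y : (0:ℝ) < y + 1 := by linarith
  set t : ℝ := (y + 1) ^ (-β) with htdef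
  have ht0 : 0 < t := Real.rpow_pos_of_pos h1y _
  have ht1 : t < 1 := Real.rpow_lt_one_of_one_lt_of_neg (by linarith) (by linarith)
  have hA : 0 < 1 - t := by linarith
  set M : ℝ := (1 - t) ^ (-α) with hMdef
  have hM0 : 0 < M := Real.rpow_pos_of_pos hA _
  have hyα : 0 < y ^ (-α) := Real.rpow_pos_of_pos hy _
  set C : ℝ := D ^ α with hCdef
  have hC : 0 < C := Real.rpow_pos_of_pos hD _
  have hM1 : 1 ≤ M := Real.one_le_rpow_of_pos_of_le_one_of_nonpos hA (by linarith) (by linarith)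
  have hle : 1 - t ≤ β * y := by
    have h := aux_bern y β hy hβ
    have ht' : t = (1 + y) ^ (-β) := by rw [htdef, add_comm]
    rw [ht']; linarith
  have hM2 : C * y ^ (-α) ≤ M := by
    have h := Real.rpow_le_rpow_of_nonpos hA hle (by linarith : -α ≤ 0)
    have heq : (β * y) ^ (-α) = C * y ^ (-α) := by
      rw [Real.mul_rpow hβ.le hy.le]
      congr 1
      rw [hCdef, ← hβD, Real.inv_rpow hβ.le, ← Real.rpow_neg hβ.le]
    rw [← heq]; exact h
  constructor
  · rw [div_mul_eq_mul_div, div_le_iff₀ (by linarith : (0:ℝ) < C + 1)]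
    nlinarith [mul_le_mul_of_nonneg_left hM1 hC.le]
  · have hw0 : (0:ℝ) < (y + 1)⁻¹ := inv_pos.mpr h1y
    have hw1 : (y + 1)⁻¹ ≤ 1 := by
      rw [inv_le_one_iff₀]; right; linarith
    have htw : t = ((y + 1)⁻¹) ^ β := by
      rw [htdef, Real.inv_rpow h1y.le, ← Real.rpow_neg h1y.le]
    have hyy : 0 < y / (y + 1) := div_pos hy h1y
    have h1w : 1 - (y + 1)⁻¹ = y / (y + 1) := by field_simp; ring
    have hlow : min 1 β * (y / (y + 1)) ≤ 1 - t := by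
      rcases le_total 1 β with hb | hb
      · rw [min_eq_left hb, one_mul, ← h1w, sub_le_sub_iff_left, htw]
        calc ((y + 1)⁻¹) ^ β ≤ ((y + 1)⁻¹) ^ (1:ℝ) :=
              Real.rpow_le_rpow_of_exponent_ge hw0 hw1 hb
          _ = (y + 1)⁻¹ := Real.rpow_one _
      · rw [min_eq_right hb]
        have hs : (-1:ℝ) ≤ (y + 1)⁻¹ - 1 := by linarith
        have h2 : (1 + ((y + 1)⁻¹ - 1)) ^ β ≤ 1 + β * ((y + 1)⁻¹ - 1) :=
          rpow_one_add_le_one_add_mul_self hs hβ.le hb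
        have h3 : (1:ℝ) + ((y + 1)⁻¹ - 1) = (y + 1)⁻¹ := by ring
        rw [h3] at h2
        have h4 : β * ((y + 1)⁻¹ - 1) = -(β * (y / (y + 1))) := by
          rw [← h1w]; ring
        rw [h4] at h2
        rw [htw]
        linarith
    have hmin : 0 < min 1 β := lt_min one_pos hβ
    have hM3 : M ≤ (min 1 β * (y / (y + 1))) ^ (-α) :=
      Real.rpow_le_rpow_of_nonpos (mul_pos hmin hyy) hlow (by linarith)
    have hsplit : (min 1 β * (y / (y + 1))) ^ (-α)
        = (min 1 β) ^ (-α) * (y / (y + 1)) ^ (-α) :=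
      Real.mul_rpow hmin.le hyy.le
    have hmax1 : (1:ℝ) ≤ max 1 D := le_max_left _ _
    have hminmax : (min 1 β)⁻¹ = max 1 D := by
      rcases le_total 1 β with hb | hb
      · have hαhalf : α ≤ 1 - α := by rw [hβdef, one_le_div hα] at hb; exact hb
        have hD1 : D ≤ 1 := by rw [hDdef, div_le_one hδ]; exact hαhalf
        rw [min_eq_left hb, inv_one, max_eq_left hD1]
      · have hαhalf : 1 - α ≤ α := by rw [hβdef, div_le_one hα] at hb; exact hb
        have hD1 : 1 ≤ D := by rw [hDdef, one_le_div hδ]; exact hαhalf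
        rw [min_eq_right hb, hβD, max_eq_right hD1]
    have hfac : (min 1 β) ^ (-α) ≤ max 1 D := by
      have e1 : (min 1 β) ^ (-α) = ((min 1 β)⁻¹) ^ α := by
        rw [Real.inv_rpow hmin.le, ← Real.rpow_neg hmin.le]
      rw [e1, hminmax]
      calc (max 1 D) ^ α ≤ (max 1 D) ^ (1:ℝ) :=
            Real.rpow_le_rpow_of_exponent_le hmax1 hα1.le
        _ = max 1 D := Real.rpow_one _
    have hsnd : (y / (y + 1)) ^ (-α) ≤ y ^ (-α) + 1 := by
      have e2 : (y / (y + 1)) ^ (-α) = (1 + 1 / y) ^ α := by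
        have hinv : (1:ℝ) + 1 / y = (y / (y + 1))⁻¹ := by
          rw [inv_div]; field_simp
        rw [hinv, Real.inv_rpow hyy.le, ← Real.rpow_neg hyy.le]
      have e3 : (1 / y : ℝ) ^ α = y ^ (-α) := by
        rw [one_div, Real.inv_rpow hy.le, ← Real.rpow_neg hy.le]
      have := aux_sub (1 / y) α (by positivity) hα hα1.le
      rw [e2]
      rw [e3] at this
      linarith
    calc M ≤ (min 1 β) ^ (-α) * (y / (y + 1)) ^ (-α) := hsplit ▸ hM3
      _ ≤ max 1 D * (y ^ (-α) + 1) := by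
          apply mul_le_mul hfac hsnd (Real.rpow_pos_of_pos hyy _).le (by linarith)
end

section
/- Let f : [0,∞) → (0,∞) be a log-concave probability density function with f(x) ≤ f(0) for all x ≥ 0. Then for all x ≥ 0, f(x) ≤ f(0)·min(1, e^(1−f(0)·x)). -/
open Real MeasureTheory intervalIntegral

/-- A log-concave probability density on `[0,∞)` with maximum at `0` satisfies
`f(x) ≤ f(0)·min(1, e^(1 − f(0)·x))` for all `x ≥ 0`. -/
theorem stmt4 (f : ℝ → ℝ)
    (hpos : ∀ x ≥ (0 : ℝ), 0 < f x)
    (hconc : ConcaveOn ℝ (Set.Ici 0) (fun x => Real.log (f x)))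
    (hmax : ∀ x ≥ (0 : ℝ), f x ≤ f 0)
    (hdens : ∫ x in Set.Ici (0 : ℝ), f x = 1) :
    ∀ x ≥ (0 : ℝ), f x ≤ f 0 * min 1 (Real.exp (1 - f 0 * x)) := by
  intro x hx
  set M := f 0 with hMdef
  have hM0 : 0 < M := hpos 0 le_rfl
  rw [mul_min_of_nonneg _ _ hM0.le, mul_one]
  refine le_min (hmax x hx) ?_
  by_contra hcon
  push_neg at hcon
  have hfxM : f x ≤ M := hmax x hx
  have hfx0 : 0 < f x := hpos x hx
  -- Step 1: M * x > 1
  have h1 : 1 < M * x := by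
    by_contra h
    push_neg at h
    have he : (1:ℝ) ≤ Real.exp (1 - M * x) := Real.one_le_exp (by linarith)
    nlinarith
  have hx0 : 0 < x := by nlinarith
  -- Step 2: pointwise lower bound on [0, x]
  set b : ℝ := (1 - M * x) / x with hbdef
  have hb0 : b < 0 := div_neg_of_neg_of_pos (by linarith) hx0
  have hpt : ∀ t ∈ Set.Icc (0:ℝ) x, M * Real.exp (b * t) ≤ f t := by
    intro t ht
    obtain ⟨ht0, htx⟩ := ht
    set a : ℝ := t / x with hadef
    have ha0 : 0 ≤ a := div_nonneg ht0 hx0.le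
    have ha1 : a ≤ 1 := (div_le_one hx0).2 htx
    have hax : (1 - a) • (0:ℝ) + a • x = t := by
      rw [hadef, smul_eq_mul, smul_eq_mul, mul_zero, zero_add, div_mul_cancel₀ _ hx0.ne']
    have hcc := hconc.2 (Set.self_mem_Ici) (hx : x ∈ Set.Ici (0:ℝ))
      (by linarith : (0:ℝ) ≤ 1 - a) ha0 (by ring)
    rw [hax] at hcc
    -- hcc : (1-a) • log (f 0) + a • log (f x) ≤ log (f t)
    have hlfx : Real.log M + (1 - M * x) ≤ Real.log (f x) := by
      have := Real.log_le_log (by positivity) hcon.le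
      rwa [Real.log_mul hM0.ne' (Real.exp_ne_zero _), Real.log_exp] at this
    have hlog : Real.log M + b * t ≤ Real.log (f t) := by
      have hbt : b * t = a * (1 - M * x) := by
        field_simp [hbdef, hadef]; ring
      have : (1 - a) * Real.log M + a * Real.log (f x) ≤ Real.log (f t) := by
        simpa [smul_eq_mul] using hcc
      nlinarith [mul_le_mul_of_nonneg_left hlfx ha0]
    calc M * Real.exp (b * t) = Real.exp (Real.log M + b * t) := by
          rw [Real.exp_add, Real.exp_log hM0]
      _ ≤ Real.exp (Real.log (f t)) := Real.exp_le_exp.2 hlog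
      _ = f t := Real.exp_log (hpos t (by linarith))
  -- integrability
  have hInt : IntegrableOn f (Set.Ici 0) := by
    by_contra h
    rw [MeasureTheory.integral_undef h] at hdens
    norm_num at hdens
  have hIntIcc : IntegrableOn f (Set.Icc 0 x) :=
    hInt.mono_set (Set.Icc_subset_Ici_self)
  have hIntg : IntegrableOn (fun t => M * Real.exp (b * t)) (Set.Icc 0 x) :=
    (Continuous.integrableOn_Icc (by continuity))
  -- Step 3: integral of the exponential lower bound
  have hIg : ∫ t in Set.Icc (0:ℝ) x, M * Real.exp (b * t)
      = M * ((Real.exp (1 - M * x) - 1) / b) := by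
    rw [MeasureTheory.integral_Icc_eq_integral_Ioc,
      ← intervalIntegral.integral_of_le hx0.le,
      intervalIntegral.integral_const_mul,
      intervalIntegral.integral_comp_mul_left Real.exp hb0.ne]
    rw [integral_exp]
    have hbx : b * x = 1 - M * x := by rw [hbdef, div_mul_cancel₀ _ hx0.ne']
    rw [mul_zero, hbx, Real.exp_zero, smul_eq_mul]
    ring
  -- Step 4: that integral exceeds 1
  have hgt1 : 1 < M * ((Real.exp (1 - M * x) - 1) / b) := by
    have hE : Real.exp (1 - M * x) > 0 := Real.exp_pos _
    have hkey : M * x * Real.exp (1 - M * x) < 1 := by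
      have h2 : M * x - 1 + 1 < Real.exp (M * x - 1) :=
        Real.add_one_lt_exp (by linarith)
      have h3 : Real.exp (M * x - 1) * Real.exp (1 - M * x) = 1 := by
        rw [← Real.exp_add]; ring_nf; exact Real.exp_zero
      nlinarith
    have heq : M * ((Real.exp (1 - M * x) - 1) / b)
        = (M * x * (1 - Real.exp (1 - M * x))) / (M * x - 1) := by
      have h1x : (1 - M * x) ≠ 0 := ne_of_lt (by linarith)
      have h2x : (M * x - 1) ≠ 0 := ne_of_gt (by linarith)
      rw [hbdef]
      field_simp [h1x, h2x]
      ring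
    rw [heq, lt_div_iff₀ (by linarith : (0:ℝ) < M * x - 1)]
    nlinarith
  -- Step 5: contradiction with total mass 1
  have hle1 : ∫ t in Set.Icc (0:ℝ) x, f t ≤ 1 := by
    rw [← hdens]
    refine MeasureTheory.setIntegral_mono_set hInt ?_ ?_
    · filter_upwards [MeasureTheory.ae_restrict_mem measurableSet_Ici] with t ht
      exact (hpos t ht).le
    · exact HasSubset.Subset.eventuallyLE Set.Icc_subset_Ici_self
  have hmono : ∫ t in Set.Icc (0:ℝ) x, M * Real.exp (b * t)
      ≤ ∫ t in Set.Icc (0:ℝ) x, f t :=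
    MeasureTheory.setIntegral_mono_on hIntg hIntIcc measurableSet_Icc hpt
  rw [hIg] at hmono
  linarith
end

section
/- Let f > 0 on an interval I with 0 < ∫_I f < ∞, and let g be a strictly increasing differentiable convex function on an interval J with g(J) = I. For any interior point x of J: ∫_{J∩(−∞,x]} f(g(u)) du / ∫_{I∩(−∞,g(x)]} f ≥ 1/g'(x) ≥ ∫_{J∩[x,∞)} f(g(u)) du / ∫_{I∩[g(x),∞)} f. -/
open Real MeasureTheory

private lemma deriv_nonneg_aux {J : Set ℝ} (hJ : J.OrdConnected) {g : ℝ → ℝ}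
    (hg : StrictMonoOn g J) {u b : ℝ} (hu : u ∈ J) (hb : b ∈ J) (hub : u < b)
    {d : ℝ} (hd : HasDerivAt g d u) : 0 ≤ d := by
  have ht : Filter.Tendsto (slope g u) (nhdsWithin u (Set.Ioi u)) (nhds d) :=
    (hasDerivAt_iff_tendsto_slope.mp hd).mono_left
      (nhdsWithin_mono _ fun v hv => ne_of_gt hv)
  refine ge_of_tendsto ht ?_
  filter_upwards [Ioo_mem_nhdsGT_of_mem ⟨le_refl u, hub⟩] with v hv
  have hvJ : v ∈ J := hJ.out hu hb ⟨hv.1.le, hv.2.le⟩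
  rw [slope_def_field]
  exact div_nonneg (sub_nonneg.2 (hg hu hvJ hv.1).le) (sub_nonneg.2 hv.1.le)

/-- Change-of-variables inequality: with `f > 0` integrable on interval `I`,
`g : J → I` strictly increasing, differentiable, convex, and `x` interior to `J`,
`∫_{J∩(−∞,x]} f∘g / ∫_{I∩(−∞,g(x)]} f ≥ 1/g'(x) ≥ ∫_{J∩[x,∞)} f∘g / ∫_{I∩[g(x),∞)} f`. -/
theorem stmt7 (I J : Set ℝ) (hI : I.OrdConnected) (hJ : J.OrdConnected)
    (f : ℝ → ℝ) (hfpos : ∀ y ∈ I, 0 < f y)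
    (hfint : MeasureTheory.IntegrableOn f I)
    (hfIpos : 0 < ∫ y in I, f y)
    (g g' : ℝ → ℝ) (hg : StrictMonoOn g J)
    (hgd : ∀ x ∈ J, HasDerivAt g (g' x) x)
    (hgconv : ConvexOn ℝ J g) (hgJ : g '' J = I)
    (hfgint : MeasureTheory.IntegrableOn (fun u => f (g u)) J)
    (x : ℝ) (hx : x ∈ interior J) :
    1 / g' x ≤ (∫ u in J ∩ Set.Iic x, f (g u)) / (∫ y in I ∩ Set.Iic (g x), f y) ∧
      (∫ u in J ∩ Set.Ici x, f (g u)) / (∫ y in I ∩ Set.Ici (g x), f y) ≤ 1 / g' x := by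
  have hxJ : x ∈ J := interior_subset hx
  obtain ⟨l, r, hxlr, hlr⟩ := mem_nhds_iff_exists_Ioo_subset.mp (mem_interior_iff_mem_nhds.mp hx)
  set a := (l + x) / 2 with ha_def
  set b := (x + r) / 2 with hb_def
  have hax : a < x := by simp only [ha_def]; linarith [hxlr.1]
  have hxb : x < b := by simp only [hb_def]; linarith [hxlr.2]
  have haJ : a ∈ J := hlr ⟨by simp only [ha_def]; linarith [hxlr.1], by linarith⟩
  have hbJ : b ∈ J := hlr ⟨by linarith, by simp only [hb_def]; linarith [hxlr.2]⟩
  -- g' x > 0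
  have hg'x : 0 < g' x := by
    have h1 : slope g a x ≤ g' x := hgconv.slope_le_of_hasDerivAt haJ hxJ hax (hgd x hxJ)
    have h2 : 0 < slope g a x := by
      rw [slope_def_field]
      exact div_pos (sub_pos.2 (hg haJ hxJ hax)) (sub_pos.2 hax)
    linarith
  -- basic measurability
  have hJm : MeasurableSet J := hJ.measurableSet
  have hs1 : MeasurableSet (J ∩ Set.Iic x) := hJm.inter measurableSet_Iic
  have hs2 : MeasurableSet (J ∩ Set.Ici x) := hJm.inter measurableSet_Ici
  have hinj1 : Set.InjOn g (J ∩ Set.Iic x) := (hg.injOn).mono Set.inter_subset_left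
  have hinj2 : Set.InjOn g (J ∩ Set.Ici x) := (hg.injOn).mono Set.inter_subset_left
  have hd1 : ∀ u ∈ J ∩ Set.Iic x, HasDerivWithinAt g (g' u) (J ∩ Set.Iic x) u :=
    fun u hu => (hgd u hu.1).hasDerivWithinAt
  have hd2 : ∀ u ∈ J ∩ Set.Ici x, HasDerivWithinAt g (g' u) (J ∩ Set.Ici x) u :=
    fun u hu => (hgd u hu.1).hasDerivWithinAt
  -- images
  have himg1 : g '' (J ∩ Set.Iic x) = I ∩ Set.Iic (g x) := by
    ext y
    constructor
    · rintro ⟨u, ⟨huJ, hux⟩, rfl⟩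
      exact ⟨hgJ ▸ Set.mem_image_of_mem g huJ, (hg.le_iff_le huJ hxJ).2 hux⟩
    · rintro ⟨hyI, hyle⟩
      rw [← hgJ] at hyI
      obtain ⟨u, huJ, rfl⟩ := hyI
      exact ⟨u, ⟨huJ, (hg.le_iff_le huJ hxJ).1 hyle⟩, rfl⟩
  have himg2 : g '' (J ∩ Set.Ici x) = I ∩ Set.Ici (g x) := by
    ext y
    constructor
    · rintro ⟨u, ⟨huJ, hux⟩, rfl⟩
      exact ⟨hgJ ▸ Set.mem_image_of_mem g huJ, (hg.le_iff_le hxJ huJ).2 hux⟩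
    · rintro ⟨hyI, hyle⟩
      rw [← hgJ] at hyI
      obtain ⟨u, huJ, rfl⟩ := hyI
      exact ⟨u, ⟨huJ, (hg.le_iff_le hxJ huJ).1 hyle⟩, rfl⟩
  -- derivative bounds on the sets
  have hub1 : ∀ u ∈ J ∩ Set.Iic x, |g' u| ≤ g' x := by
    rintro u ⟨huJ, hux⟩
    have hnn : 0 ≤ g' u := deriv_nonneg_aux hJ hg huJ hbJ (lt_of_le_of_lt (Set.mem_Iic.mp hux) hxb) (hgd u huJ)
    rw [abs_of_nonneg hnn]
    rcases eq_or_lt_of_le (Set.mem_Iic.mp hux) with rfl | hux'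
    · exact le_rfl
    · have h1 : g' u ≤ slope g u x := hgconv.le_slope_of_hasDerivAt huJ hxJ hux' (hgd u huJ)
      have h2 : slope g u x ≤ g' x := hgconv.slope_le_of_hasDerivAt huJ hxJ hux' (hgd x hxJ)
      linarith
  have hlb2 : ∀ u ∈ J ∩ Set.Ici x, g' x ≤ |g' u| := by
    rintro u ⟨huJ, hxu⟩
    rcases eq_or_lt_of_le (Set.mem_Ici.mp hxu) with rfl | hxu'
    · exact le_abs_self _
    · have h1 : g' x ≤ slope g x u := hgconv.le_slope_of_hasDerivAt hxJ huJ hxu' (hgd x hxJ)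
      have h2 : slope g x u ≤ g' u := hgconv.slope_le_of_hasDerivAt hxJ huJ hxu' (hgd u huJ)
      rw [abs_of_nonneg (by linarith)]
      linarith
  -- change of variables
  have key1 : ∫ y in I ∩ Set.Iic (g x), f y = ∫ u in J ∩ Set.Iic x, |g' u| * f (g u) := by
    rw [← himg1, integral_image_eq_integral_abs_deriv_smul hs1 hd1 hinj1 f]
    simp [smul_eq_mul]
  have key2 : ∫ y in I ∩ Set.Ici (g x), f y = ∫ u in J ∩ Set.Ici x, |g' u| * f (g u) := by
    rw [← himg2, integral_image_eq_integral_abs_deriv_smul hs2 hd2 hinj2 f]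
    simp [smul_eq_mul]
  -- integrability of pulled-back integrands
  have hint1 : IntegrableOn (fun u => |g' u| * f (g u)) (J ∩ Set.Iic x) := by
    have := (integrableOn_image_iff_integrableOn_abs_deriv_smul hs1 hd1 hinj1 f).mp
      (by rw [himg1]; exact hfint.mono_set Set.inter_subset_left)
    simpa [smul_eq_mul] using this
  have hint2 : IntegrableOn (fun u => |g' u| * f (g u)) (J ∩ Set.Ici x) := by
    have := (integrableOn_image_iff_integrableOn_abs_deriv_smul hs2 hd2 hinj2 f).mp
      (by rw [himg2]; exact hfint.mono_set Set.inter_subset_left)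
    simpa [smul_eq_mul] using this
  have hintc1 : IntegrableOn (fun u => g' x * f (g u)) (J ∩ Set.Iic x) :=
    (hfgint.mono_set Set.inter_subset_left).const_mul _
  have hintc2 : IntegrableOn (fun u => g' x * f (g u)) (J ∩ Set.Ici x) :=
    (hfgint.mono_set Set.inter_subset_left).const_mul _
  -- positivity of f ∘ g on J
  have hfg : ∀ u ∈ J, 0 < f (g u) := fun u hu =>
    hfpos _ (hgJ ▸ Set.mem_image_of_mem g hu)
  -- comparison integrals
  have hcmp1 : (∫ u in J ∩ Set.Iic x, |g' u| * f (g u)) ≤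
      ∫ u in J ∩ Set.Iic x, g' x * f (g u) := by
    refine setIntegral_mono_on hint1 hintc1 hs1 fun u hu => ?_
    exact mul_le_mul_of_nonneg_right (hub1 u hu) (hfg u hu.1).le
  have hcmp2 : (∫ u in J ∩ Set.Ici x, g' x * f (g u)) ≤
      ∫ u in J ∩ Set.Ici x, |g' u| * f (g u) := by
    refine setIntegral_mono_on hintc2 hint2 hs2 fun u hu => ?_
    exact mul_le_mul_of_nonneg_right (hlb2 u hu) (hfg u hu.1).le
  rw [integral_const_mul] at hcmp1 hcmp2
  -- positivity of denominators
  have hmeasI1 : MeasurableSet (I ∩ Set.Iic (g x)) := hI.measurableSet.inter measurableSet_Iic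
  have hmeasI2 : MeasurableSet (I ∩ Set.Ici (g x)) := hI.measurableSet.inter measurableSet_Ici
  have hga : g a < g x := hg haJ hxJ hax
  have hgb : g x < g b := hg hxJ hbJ hxb
  have hD1 : 0 < ∫ y in I ∩ Set.Iic (g x), f y := by
    rw [setIntegral_pos_iff_support_of_nonneg_ae
      (MeasureTheory.ae_restrict_of_forall_mem hmeasI1 fun y hy => (hfpos y hy.1).le)
      (hfint.mono_set Set.inter_subset_left)]
    have hsub : Set.Ioo (g a) (g x) ⊆ Function.support f ∩ (I ∩ Set.Iic (g x)) := by
      intro y hy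
      have hyI : y ∈ I := hI.out (hgJ ▸ Set.mem_image_of_mem g haJ)
        (hgJ ▸ Set.mem_image_of_mem g hxJ) ⟨hy.1.le, hy.2.le⟩
      exact ⟨(hfpos y hyI).ne', hyI, hy.2.le⟩
    calc (0:ENNReal) < MeasureTheory.volume (Set.Ioo (g a) (g x)) := by
          simp [Real.volume_Ioo, hga]
      _ ≤ _ := measure_mono hsub
  have hD2 : 0 < ∫ y in I ∩ Set.Ici (g x), f y := by
    rw [setIntegral_pos_iff_support_of_nonneg_ae
      (MeasureTheory.ae_restrict_of_forall_mem hmeasI2 fun y hy => (hfpos y hy.1).le)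
      (hfint.mono_set Set.inter_subset_left)]
    have hsub : Set.Ioo (g x) (g b) ⊆ Function.support f ∩ (I ∩ Set.Ici (g x)) := by
      intro y hy
      have hyI : y ∈ I := hI.out (hgJ ▸ Set.mem_image_of_mem g hxJ)
        (hgJ ▸ Set.mem_image_of_mem g hbJ) ⟨hy.1.le, hy.2.le⟩
      exact ⟨(hfpos y hyI).ne', hyI, hy.1.le⟩
    calc (0:ENNReal) < MeasureTheory.volume (Set.Ioo (g x) (g b)) := by
          simp [Real.volume_Ioo, hgb]
      _ ≤ _ := measure_mono hsub
  constructor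
  · rw [div_le_div_iff₀ hg'x hD1]
    calc 1 * ∫ y in I ∩ Set.Iic (g x), f y
        = ∫ u in J ∩ Set.Iic x, |g' u| * f (g u) := by rw [one_mul, key1]
      _ ≤ g' x * ∫ u in J ∩ Set.Iic x, f (g u) := hcmp1
      _ = (∫ u in J ∩ Set.Iic x, f (g u)) * g' x := mul_comm _ _
  · rw [div_le_div_iff₀ hD2 hg'x]
    calc (∫ u in J ∩ Set.Ici x, f (g u)) * g' x
        = g' x * ∫ u in J ∩ Set.Ici x, f (g u) := mul_comm _ _
      _ ≤ ∫ u in J ∩ Set.Ici x, |g' u| * f (g u) := hcmp2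
      _ = 1 * ∫ y in I ∩ Set.Ici (g x), f y := by rw [one_mul, key2]
end

section
/- For c ∈ [1,2) and 0 ≤ d < b, one has d^(c−1)e^(−d) − b^(c−1)e^(−b) ≤ ∫_d^b x^(c−1)e^(−x) dx ≤ 2·[d^(c−1)e^(−d) − b^(c−1)e^(−b)], provided d ≥ c − 1 + 1 (e.g., d ≥ 2). -/
open Real

/-- For `c ∈ [1,2)` and `d ≥ c − 1 + 1`, `d < b`:
`d^(c−1)e^(−d) − b^(c−1)e^(−b) ≤ ∫_d^b x^(c−1)e^(−x) dx
  ≤ 2·(d^(c−1)e^(−d) − b^(c−1)e^(−b))`. -/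
theorem stmt9 (c d b : ℝ) (hc1 : 1 ≤ c) (hc2 : c < 2)
    (hd : c - 1 + 1 ≤ d) (hdb : d < b) :
    d ^ (c - 1) * Real.exp (-d) - b ^ (c - 1) * Real.exp (-b) ≤
        (∫ x in d..b, x ^ (c - 1) * Real.exp (-x)) ∧
      (∫ x in d..b, x ^ (c - 1) * Real.exp (-x)) ≤
        2 * (d ^ (c - 1) * Real.exp (-d) - b ^ (c - 1) * Real.exp (-b)) := by
  have hcd : c ≤ d := by linarith
  have hd0 : (0:ℝ) < d := by linarith
  set f : ℝ → ℝ := fun x => (x ^ (c - 1) - (c - 1) * x ^ (c - 2)) * Real.exp (-x) with hf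
  set g : ℝ → ℝ := fun x => x ^ (c - 1) * Real.exp (-x) with hg
  -- derivative fact
  have hderiv : ∀ x ∈ Set.uIcc d b, HasDerivAt (fun y => -(y ^ (c - 1) * Real.exp (-y))) (f x) x := by
    intro x hx
    rw [Set.uIcc_of_le hdb.le] at hx
    have hx0 : (0:ℝ) < x := lt_of_lt_of_le hd0 hx.1
    have h1 : HasDerivAt (fun y : ℝ => y ^ (c - 1)) ((c - 1) * x ^ (c - 1 - 1)) x :=
      Real.hasDerivAt_rpow_const (Or.inl hx0.ne')
    have h2 : HasDerivAt (fun y : ℝ => Real.exp (-y)) (-Real.exp (-x)) x := by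
      simpa using (hasDerivAt_neg x).exp
    have := (h1.mul h2).neg
    refine this.congr_deriv ?_
    have : c - 1 - 1 = c - 2 := by ring
    rw [this]; simp [hf]; ring
  have hcontg : ContinuousOn g (Set.uIcc d b) := by
    apply ContinuousOn.mul _ (Continuous.continuousOn (by continuity))
    apply ContinuousOn.rpow_const continuousOn_id
    intro x hx
    rw [Set.uIcc_of_le hdb.le] at hx
    exact Or.inl (ne_of_gt (lt_of_lt_of_le hd0 hx.1))
  have hcontf : ContinuousOn f (Set.uIcc d b) := by
    apply ContinuousOn.mul _ (Continuous.continuousOn (by continuity))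
    apply ContinuousOn.sub
    · apply ContinuousOn.rpow_const continuousOn_id
      intro x hx
      rw [Set.uIcc_of_le hdb.le] at hx
      exact Or.inl (ne_of_gt (lt_of_lt_of_le hd0 hx.1))
    · apply ContinuousOn.mul continuousOn_const
      apply ContinuousOn.rpow_const continuousOn_id
      intro x hx
      rw [Set.uIcc_of_le hdb.le] at hx
      exact Or.inl (ne_of_gt (lt_of_lt_of_le hd0 hx.1))
  have hintf : IntervalIntegrable f MeasureTheory.volume d b := hcontf.intervalIntegrable
  have hintg : IntervalIntegrable g MeasureTheory.volume d b := hcontg.intervalIntegrable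
  have hftc : (∫ x in d..b, f x) =
      d ^ (c - 1) * Real.exp (-d) - b ^ (c - 1) * Real.exp (-b) := by
    rw [intervalIntegral.integral_eq_sub_of_hasDerivAt hderiv hintf]
    ring
  -- pointwise inequalities on [d, b]
  have hfle : ∀ x ∈ Set.Icc d b, f x ≤ g x := by
    intro x hx
    have hx0 : (0:ℝ) < x := lt_of_lt_of_le hd0 hx.1
    have h1 : 0 ≤ (c - 1) * x ^ (c - 2) :=
      mul_nonneg (by linarith) (Real.rpow_nonneg hx0.le _)
    have h2 : 0 < Real.exp (-x) := Real.exp_pos _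
    simp only [hf, hg]
    nlinarith [h2.le]
  have hgle : ∀ x ∈ Set.Icc d b, g x ≤ 2 * f x := by
    intro x hx
    have hx0 : (0:ℝ) < x := lt_of_lt_of_le hd0 hx.1
    have hxc : c ≤ x := le_trans hcd hx.1
    have h2 : 0 < Real.exp (-x) := Real.exp_pos _
    have hsplit : x ^ (c - 1) = x ^ (c - 2) * x := by
      rw [← Real.rpow_add_one hx0.ne']; ring_nf
    have hpow : 0 ≤ x ^ (c - 2) := Real.rpow_nonneg hx0.le _
    simp only [hf, hg]
    rw [hsplit]
    have key : x ^ (c - 2) * x ≤ 2 * (x ^ (c - 2) * x - (c - 1) * x ^ (c - 2)) := by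
      nlinarith
    nlinarith [h2.le]
  constructor
  · rw [← hftc]
    exact intervalIntegral.integral_mono_on hdb.le hintf hintg hfle
  · rw [← hftc]
    have : (∫ x in d..b, 2 * f x) = 2 * ∫ x in d..b, f x := by
      simp [intervalIntegral.integral_const_mul]
    rw [← this]
    exact intervalIntegral.integral_mono_on hdb.le hintg (hintf.const_mul 2) hgle
end

section
/- For every integer n ≥ 7 and 0 < x ≤ 4: (e^x − Σ_{k=0}^{n} x^k/k!)/(x^(n+1)/(n+1)!) ≤ 2(n+1)/(n+2). -/
open Real

lemma exp_tsum_real (x : ℝ) : Real.exp x = ∑' k : ℕ, x ^ k / (Nat.factorial k : ℝ) := by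
  rw [Real.exp_eq_exp_ℝ, NormedSpace.exp_eq_tsum_div]

lemma tail_bound (m : ℕ) (x : ℝ) (hx : 0 < x) (hxm : x < (m : ℝ) + 1) :
    ∑' k : ℕ, x ^ (k + m) / (Nat.factorial (k + m) : ℝ) ≤
      x ^ m / (Nat.factorial m : ℝ) * (1 - x / ((m : ℝ) + 1))⁻¹ := by
  have hq0 : 0 ≤ x / ((m : ℝ) + 1) := by positivity
  have hq1 : x / ((m : ℝ) + 1) < 1 := by
    rw [div_lt_one (by positivity)]; exact hxm
  have hsum : Summable (fun k : ℕ => x ^ (k + m) / (Nat.factorial (k + m) : ℝ)) :=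
    (summable_nat_add_iff m).2 (Real.summable_pow_div_factorial x)
  have hg : Summable (fun k : ℕ => x ^ m / (Nat.factorial m : ℝ) * (x / ((m : ℝ) + 1)) ^ k) :=
    (summable_geometric_of_lt_one hq0 hq1).mul_left _
  calc ∑' k : ℕ, x ^ (k + m) / (Nat.factorial (k + m) : ℝ)
      ≤ ∑' k : ℕ, x ^ m / (Nat.factorial m : ℝ) * (x / ((m : ℝ) + 1)) ^ k := by
        apply Summable.tsum_le_tsum _ hsum hg
        intro k
        have hfact : ((Nat.factorial m : ℝ)) * ((m : ℝ) + 1) ^ k ≤ (Nat.factorial (k + m) : ℝ) := by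
          have h := Nat.factorial_mul_pow_le_factorial (m := m) (n := k)
          have h2 : Nat.factorial m * (m + 1) ^ k ≤ Nat.factorial (k + m) := by
            rw [Nat.add_comm k m]; exact h
          exact_mod_cast h2
        have hrhs : x ^ m / (Nat.factorial m : ℝ) * (x / ((m : ℝ) + 1)) ^ k =
            x ^ m * x ^ k / ((Nat.factorial m : ℝ) * ((m : ℝ) + 1) ^ k) := by
          rw [div_pow, div_mul_div_comm]
        rw [hrhs, pow_add, mul_comm (x ^ k)]
        exact div_le_div_of_nonneg_left (by positivity) (by positivity) hfact
    _ = x ^ m / (Nat.factorial m : ℝ) * (1 - x / ((m : ℝ) + 1))⁻¹ := by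
        rw [tsum_mul_left, tsum_geometric_of_lt_one hq0 hq1]

set_option maxHeartbeats 1600000 in
/-- For every integer `n ≥ 7` and `0 < x ≤ 4`:
`(e^x − Σ_{k=0}^n x^k/k!)/(x^(n+1)/(n+1)!) ≤ 2(n+1)/(n+2)`. -/
theorem stmt11 (n : ℕ) (hn : 7 ≤ n) (x : ℝ) (hx0 : 0 < x) (hx4 : x ≤ 4) :
    (Real.exp x - ∑ k ∈ Finset.range (n + 1), x ^ k / (Nat.factorial k : ℝ)) /
        (x ^ (n + 1) / (Nat.factorial (n + 1) : ℝ)) ≤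
      2 * ((n : ℝ) + 1) / ((n : ℝ) + 2) := by
  have hN : (7 : ℝ) ≤ (n : ℝ) := by exact_mod_cast hn
  have hsum : Summable (fun k : ℕ => x ^ k / (Nat.factorial k : ℝ)) :=
    Real.summable_pow_div_factorial x
  have hrem : Real.exp x - ∑ k ∈ Finset.range (n + 1), x ^ k / (Nat.factorial k : ℝ) =
      ∑' k : ℕ, x ^ (k + (n + 1)) / (Nat.factorial (k + (n + 1)) : ℝ) := by
    rw [exp_tsum_real, ← Summable.sum_add_tsum_nat_add (n + 1) hsum]
    ring
  have hsum2 : Summable (fun k : ℕ => x ^ (k + (n+1)) / (Nat.factorial (k + (n+1)) : ℝ)) :=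
    (summable_nat_add_iff (n+1)).2 hsum
  have hsplit : ∑' k : ℕ, x ^ (k + (n + 1)) / (Nat.factorial (k + (n + 1)) : ℝ) =
      x ^ (n+1) / (Nat.factorial (n+1) : ℝ) + x ^ (n+2) / (Nat.factorial (n+2) : ℝ) +
      ∑' k : ℕ, x ^ (k + (n + 3)) / (Nat.factorial (k + (n + 3)) : ℝ) := by
    rw [← Summable.sum_add_tsum_nat_add 2 hsum2]
    congr 1
    · rw [Finset.sum_range_succ, Finset.sum_range_one,
        show 0 + (n+1) = n+1 from by omega, show 1 + (n+1) = n+2 from by omega]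
    · apply tsum_congr; intro k
      rw [show k + 2 + (n+1) = k + (n+3) from by omega]
  have htail := tail_bound (n+3) x hx0 (by push_cast; linarith)
  push_cast at htail
  have h4pos : (0:ℝ) < (n:ℝ) + 4 - x := by linarith
  have hqpos : (0:ℝ) < 1 - x / ((n:ℝ) + 3 + 1) := by
    rw [sub_pos, div_lt_one (by positivity)]; linarith
  have hinv : (1 - x / ((n:ℝ) + 3 + 1))⁻¹ = ((n:ℝ) + 4) / ((n:ℝ) + 4 - x) := by
    have hne : ((n:ℝ) + 4) ≠ 0 := by positivity
    have h1 : 1 - x / ((n:ℝ) + 3 + 1) = ((n:ℝ) + 4 - x) / ((n:ℝ) + 4) := by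
      rw [sub_div, div_self hne]; ring_nf
    rw [h1, inv_div]
  have hf1 : (Nat.factorial (n+2) : ℝ) = ((n:ℝ) + 2) * (Nat.factorial (n+1) : ℝ) := by
    rw [Nat.factorial_succ]; push_cast; ring
  have hf2 : (Nat.factorial (n+3) : ℝ) =
      ((n:ℝ) + 3) * ((n:ℝ) + 2) * (Nat.factorial (n+1) : ℝ) := by
    rw [Nat.factorial_succ, Nat.factorial_succ]; push_cast; ring
  have hfpos : (0:ℝ) < (Nat.factorial (n+1) : ℝ) := by positivity
  have hApos : (0:ℝ) < x ^ (n+1) / (Nat.factorial (n+1) : ℝ) := by positivity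
  set A := x ^ (n+1) / (Nat.factorial (n+1) : ℝ) with hA
  have hterm2 : x ^ (n+2) / (Nat.factorial (n+2) : ℝ) = A * (x / ((n:ℝ) + 2)) := by
    rw [hA, hf1, pow_succ, div_mul_div_comm, mul_comm ((n:ℝ)+2)]
  have hterm3 : x ^ (n+3) / (Nat.factorial (n+3) : ℝ) =
      A * (x^2 / (((n:ℝ) + 2) * ((n:ℝ) + 3))) := by
    rw [hA, hf2, show x ^ (n+3) = x ^ (n+1) * x^2 from by ring, div_mul_div_comm]
    ring_nf
  have h3 : x ^ (n+3) / (Nat.factorial (n+3) : ℝ) * (1 - x / ((n:ℝ) + 3 + 1))⁻¹ =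
      A * (x^2 / (((n:ℝ) + 2) * ((n:ℝ) + 3)) * (((n:ℝ) + 4) / ((n:ℝ) + 4 - x))) := by
    rw [hterm3, hinv]; ring
  rw [h3] at htail
  have hkey : 1 + x / ((n:ℝ) + 2) + x^2 / (((n:ℝ) + 2) * ((n:ℝ) + 3)) *
      (((n:ℝ) + 4) / ((n:ℝ) + 4 - x)) ≤ 2 * ((n:ℝ) + 1) / ((n:ℝ) + 2) := by
    set N := (n:ℝ)
    have h2 : (0:ℝ) < N + 2 := by linarith
    have h3' : (0:ℝ) < N + 3 := by linarith
    have hD : (0:ℝ) < (N + 2) * (N + 3) * (N + 4 - x) := by positivity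
    have e1 : (1 + x / (N + 2) + x^2 / ((N + 2) * (N + 3)) * ((N + 4) / (N + 4 - x))) *
        ((N + 2) * (N + 3) * (N + 4 - x)) =
        (N + 2) * (N + 3) * (N + 4 - x) + x * (N + 3) * (N + 4 - x) + x^2 * (N + 4) := by
      field_simp
    have e2 : 2 * (N + 1) / (N + 2) * ((N + 2) * (N + 3) * (N + 4 - x)) =
        2 * (N + 1) * (N + 3) * (N + 4 - x) := by
      field_simp
    refine le_of_mul_le_mul_right ?_ hD
    rw [e1, e2]
    nlinarith [mul_nonneg (sub_nonneg.2 hx4) (sub_nonneg.2 hN), sq_nonneg (N - 7),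
      mul_nonneg (mul_nonneg (sub_nonneg.2 hx4) hx0.le) (by linarith : (0:ℝ) ≤ N),
      mul_nonneg (sub_nonneg.2 hN) (sq_nonneg N),
      mul_nonneg (sub_nonneg.2 hx4) (by nlinarith : (0:ℝ) ≤ 2 * N^2 + 10 * N + 16 + x)]
  have hbound : ∑' k : ℕ, x ^ (k + (n + 1)) / (Nat.factorial (k + (n + 1)) : ℝ) ≤
      A * (1 + x / ((n:ℝ) + 2) + x^2 / (((n:ℝ) + 2) * ((n:ℝ) + 3)) *
      (((n:ℝ) + 4) / ((n:ℝ) + 4 - x))) := by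
    rw [hsplit, hterm2]
    have hexp : A * (1 + x / ((n:ℝ) + 2) + x^2 / (((n:ℝ) + 2) * ((n:ℝ) + 3)) *
        (((n:ℝ) + 4) / ((n:ℝ) + 4 - x))) =
        A + A * (x / ((n:ℝ) + 2)) +
        A * (x^2 / (((n:ℝ) + 2) * ((n:ℝ) + 3)) * (((n:ℝ) + 4) / ((n:ℝ) + 4 - x))) := by
      ring
    rw [hexp]
    exact add_le_add le_rfl htail
  rw [div_le_iff₀ hApos, hrem]
  calc ∑' k : ℕ, x ^ (k + (n + 1)) / (Nat.factorial (k + (n + 1)) : ℝ)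
      ≤ A * (1 + x / ((n:ℝ) + 2) + x^2 / (((n:ℝ) + 2) * ((n:ℝ) + 3)) *
        (((n:ℝ) + 4) / ((n:ℝ) + 4 - x))) := hbound
    _ ≤ 2 * ((n:ℝ) + 1) / ((n:ℝ) + 2) * A := by
        rw [mul_comm _ A]
        exact mul_le_mul_of_nonneg_left hkey (le_of_lt hApos)
end

section
/- Let c ∈ (0,1), 0 ≤ a < b, and define D(a,b,c) = 2[b^(c−1)(e^b − 1 − b) − a^(c−1)(e^a − 1 − a)] and M(a,b,c) = (b^c − a^c)/c + D(a,b,c). Then (b^c − a^c)/c + D(a,b,c)/2 ≤ ∫_a^b x^(c−1)e^x dx ≤ M(a,b,c); in particular ∫_a^b x^(c−1)e^x dx > M(a,b,c)/2. -/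
open Real MeasureTheory intervalIntegral Set

lemma exp_sub_one_le (x : ℝ) : Real.exp x - 1 ≤ x * Real.exp x := by
  have h := mul_le_mul_of_nonneg_right (Real.add_one_le_exp (-x)) (Real.exp_pos x).le
  rw [← Real.exp_add] at h
  simp at h
  nlinarith

lemma key_ineq (x : ℝ) (hx : 0 ≤ x) :
    2 * (Real.exp x - 1 - x) ≤ x * (Real.exp x - 1) := by
  set f : ℝ → ℝ := fun t => t * Real.exp t + t - 2 * Real.exp t + 2 with hf
  have hd : ∀ y : ℝ, HasDerivAt f ((y - 1) * Real.exp y + 1) y := by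
    intro y
    have h1 := ((hasDerivAt_id y).mul (Real.hasDerivAt_exp y))
    have h2 := (((h1.add (hasDerivAt_id y)).sub
      ((Real.hasDerivAt_exp y).const_mul 2)).add_const 2)
    refine h2.congr_deriv ?_
    simp only [id]
    ring
  have hmono : Monotone f := by
    apply monotone_of_deriv_nonneg
    · exact fun y => (hd y).differentiableAt
    · intro y
      rw [(hd y).deriv]
      have h := mul_le_mul_of_nonneg_right (Real.add_one_le_exp (-y)) (Real.exp_pos y).le
      rw [← Real.exp_add] at h
      simp at h
      nlinarith
  have h0 : f 0 = 0 := by simp [hf]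
  have := hmono hx
  rw [h0] at this
  simp only [hf] at this
  nlinarith

/-- With `D(a,b,c) = 2[b^(c−1)(e^b−1−b) − a^(c−1)(e^a−1−a)]` and
`M(a,b,c) = (b^c − a^c)/c + D(a,b,c)`:
`(b^c−a^c)/c + D/2 ≤ ∫_a^b x^(c−1)e^x dx ≤ M`, in particular the integral `> M/2`. -/
theorem stmt16 (a b c : ℝ) (ha : 0 ≤ a) (hab : a < b) (hc : c ∈ Set.Ioo (0 : ℝ) 1) :
    (b ^ c - a ^ c) / c +
        (2 * (b ^ (c - 1) * (Real.exp b - 1 - b) - a ^ (c - 1) * (Real.exp a - 1 - a))) / 2 ≤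
        (∫ x in a..b, x ^ (c - 1) * Real.exp x) ∧
      (∫ x in a..b, x ^ (c - 1) * Real.exp x) ≤
        (b ^ c - a ^ c) / c +
          2 * (b ^ (c - 1) * (Real.exp b - 1 - b) - a ^ (c - 1) * (Real.exp a - 1 - a)) ∧
      ((b ^ c - a ^ c) / c +
          2 * (b ^ (c - 1) * (Real.exp b - 1 - b) - a ^ (c - 1) * (Real.exp a - 1 - a))) / 2 <
        (∫ x in a..b, x ^ (c - 1) * Real.exp x) := by
  obtain ⟨hc0, hc1⟩ := hc
  have hb : 0 < b := lt_of_le_of_lt ha hab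
  have hr : (-1 : ℝ) < c - 1 := by linarith
  -- integrability of x^(c-1) * exp x
  have hI1 : IntervalIntegrable (fun x : ℝ => x ^ (c - 1) * Real.exp x) volume a b :=
    (intervalIntegrable_rpow' hr).mul_continuousOn Real.continuous_exp.continuousOn
  have hIr : IntervalIntegrable (fun x : ℝ => x ^ (c - 1)) volume a b :=
    intervalIntegrable_rpow' hr
  -- g = x^(c-1) (e^x - 1)
  set g : ℝ → ℝ := fun x => x ^ (c - 1) * (Real.exp x - 1) with hg
  have hIg : IntervalIntegrable g volume a b := by
    have : g = fun x => x ^ (c - 1) * Real.exp x - x ^ (c - 1) := by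
      funext x; simp [hg]; ring
    rw [this]
    exact hI1.sub hIr
  have hIgIcc : IntegrableOn g (Icc a b) volume := by
    rw [integrableOn_Icc_iff_integrableOn_Ioc]
    exact (intervalIntegrable_iff_integrableOn_Ioc_of_le hab.le).mp hIg
  -- F = x^(c-1)(e^x - 1 - x)
  set F : ℝ → ℝ := fun x => x ^ (c - 1) * (Real.exp x - 1 - x) with hF
  -- derivative of F on (a,b)
  set F' : ℝ → ℝ := fun x =>
    (c - 1) * x ^ (c - 2) * (Real.exp x - 1 - x) + x ^ (c - 1) * (Real.exp x - 1) with hF'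
  have hderiv : ∀ x ∈ Ioo a b, HasDerivAt F (F' x) x := by
    intro x hx
    have hx0 : 0 < x := lt_of_le_of_lt ha hx.1
    have h1 : HasDerivAt (fun t : ℝ => t ^ (c - 1)) ((c - 1) * x ^ (c - 1 - 1)) x :=
      Real.hasDerivAt_rpow_const (Or.inl hx0.ne')
    have h2 : HasDerivAt (fun t : ℝ => Real.exp t - 1 - t) (Real.exp x - 1) x := by
      exact ((Real.hasDerivAt_exp x).sub_const 1).sub (hasDerivAt_id' x)
    have := h1.mul h2
    have hee : c - 1 - 1 = c - 2 := by ring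
    rw [hee] at this
    exact this
  -- continuity of F on [a,b]
  have hcont : ContinuousOn F (Icc a b) := by
    intro x hx
    rcases eq_or_lt_of_le (ha.trans hx.1) with h0 | h0
    · -- x = 0, squeeze
      have hx0 : x = 0 := h0.symm
      subst hx0
      have ha0 : a = 0 := le_antisymm hx.1 ha
      have hF0 : F 0 = 0 := by
        simp [hF, Real.zero_rpow (by intro h; apply (by linarith : c - 1 ≠ 0) h : c - 1 ≠ 0)]
      rw [ContinuousWithinAt, hF0]
      apply squeeze_zero' (f := F) (g := fun x => x ^ (c + 1) * Real.exp x)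
      · filter_upwards [self_mem_nhdsWithin] with y hy
        have hy0 : 0 ≤ y := ha0 ▸ hy.1
        have hE : 0 ≤ Real.exp y - 1 - y := by nlinarith [Real.add_one_le_exp y]
        exact mul_nonneg (Real.rpow_nonneg hy0 _) hE
      · filter_upwards [self_mem_nhdsWithin] with y hy
        have hy0 : 0 ≤ y := ha0 ▸ hy.1
        rcases eq_or_lt_of_le hy0 with h | h
        · simp [hF, ← h, Real.zero_rpow (by linarith : c - 1 ≠ 0),
            Real.zero_rpow (by linarith : c + 1 ≠ 0)]
        · have hE : Real.exp y - 1 - y ≤ y ^ 2 * Real.exp y := by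
            nlinarith [exp_sub_one_le y, Real.exp_pos y]
          have : F y ≤ y ^ (c - 1) * (y ^ 2 * Real.exp y) :=
            mul_le_mul_of_nonneg_left hE (Real.rpow_nonneg hy0 _)
          have heq : y ^ (c - 1) * y ^ (2:ℝ) = y ^ (c + 1) := by
            rw [← Real.rpow_add h]; ring_nf
          calc F y ≤ y ^ (c - 1) * (y ^ 2 * Real.exp y) := this
            _ = y ^ (c + 1) * Real.exp y := by
                rw [← mul_assoc, ← Real.rpow_natCast y 2] at *
                push_cast at heq ⊢
                rw [heq]
      · have : ContinuousAt (fun x : ℝ => x ^ (c + 1) * Real.exp x) 0 := by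
          apply ContinuousAt.mul _ Real.continuous_exp.continuousAt
          exact (Real.continuousAt_rpow_const 0 (c + 1) (Or.inr (by linarith))).congr
            (by rfl)
        have h0 : (0 : ℝ) ^ (c + 1) * Real.exp 0 = 0 := by
          simp [Real.zero_rpow (by linarith : c + 1 ≠ 0)]
        have h2 : ContinuousWithinAt (fun x : ℝ => x ^ (c + 1) * Real.exp x) (Icc a b) 0 :=
          this.continuousWithinAt
        simpa [ContinuousWithinAt, h0, Real.zero_rpow (by linarith : c + 1 ≠ 0)] using h2
    · exact (ContinuousAt.continuousWithinAt (by
        apply ContinuousAt.mul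
        · exact Real.continuousAt_rpow_const x (c - 1) (Or.inl h0.ne')
        · exact (Real.continuous_exp.continuousAt.sub continuousAt_const).sub continuousAt_id))
  -- lower bound: F b - F a ≤ ∫ g
  have hlow : F b - F a ≤ ∫ y in a..b, g y := by
    apply sub_le_integral_of_hasDeriv_right_of_le hab.le hcont
      (fun x hx => (hderiv x hx).hasDerivWithinAt) hIgIcc
    intro x hx
    have hx0 : 0 < x := lt_of_le_of_lt ha hx.1
    have hE : 0 ≤ Real.exp x - 1 - x := by nlinarith [Real.add_one_le_exp x]
    have : (c - 1) * x ^ (c - 2) * (Real.exp x - 1 - x) ≤ 0 := by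
      apply mul_nonpos_of_nonpos_of_nonneg _ hE
      exact mul_nonpos_of_nonpos_of_nonneg (by linarith) (Real.rpow_nonneg hx0.le _)
    simp only [hF', hg]
    linarith
  -- upper bound: ∫ g ≤ 2 (F b - F a)
  have hup : (∫ y in a..b, g y) ≤ 2 * F b - 2 * F a := by
    apply integral_le_sub_of_hasDeriv_right_of_le (g := fun x => 2 * F x)
      (g' := fun x => 2 * F' x) hab.le (hcont.const_smul 2 |>.congr (fun x _ => by simp))
      (fun x hx => ((hderiv x hx).const_mul 2).hasDerivWithinAt) hIgIcc
    intro x hx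
    have hx0 : 0 < x := lt_of_le_of_lt ha hx.1
    have hkey := key_ineq x hx0.le
    have hxp : 0 ≤ x ^ (c - 2) := Real.rpow_nonneg hx0.le _
    have hsplit : x ^ (c - 1) = x ^ (c - 2) * x := by
      rw [← Real.rpow_add_one hx0.ne' (c - 2)]; ring_nf
    have hE : 0 ≤ Real.exp x - 1 - x := by nlinarith [Real.add_one_le_exp x]
    -- need: g x ≤ 2 F' x
    simp only [hg, hF']
    rw [hsplit]
    have h1 : 2 * (1 - c) * (Real.exp x - 1 - x) ≤ x * (Real.exp x - 1) := by
      have : 2 * (1 - c) * (Real.exp x - 1 - x) ≤ 2 * (Real.exp x - 1 - x) := by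
        nlinarith
      linarith
    nlinarith [mul_le_mul_of_nonneg_left h1 hxp]
  -- compute ∫ x^(c-1)
  have hrpow : (∫ x in a..b, x ^ (c - 1)) = (b ^ c - a ^ c) / c := by
    rw [integral_rpow (Or.inl hr)]
    norm_num
  have hsplit : (∫ x in a..b, x ^ (c - 1) * Real.exp x)
      = (b ^ c - a ^ c) / c + ∫ y in a..b, g y := by
    rw [← hrpow, ← intervalIntegral.integral_add hIr hIg]
    congr 1
    funext x
    simp [hg]
    ring
  have hFa : F b - F a = b ^ (c - 1) * (Real.exp b - 1 - b) - a ^ (c - 1) * (Real.exp a - 1 - a) := rfl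
  have hpos : 0 < (b ^ c - a ^ c) / c := by
    apply div_pos _ hc0
    have := Real.rpow_lt_rpow ha hab hc0
    linarith
  refine ⟨?_, ?_, ?_⟩
  · rw [hsplit]; linarith [hlow, hFa]
  · rw [hsplit]; linarith [hup, hFa]
  · rw [hsplit]; linarith [hlow, hFa, hpos]
end

section
/- For α ∈ [1/2, 1), δ = 1−α, and θ ∈ (0,π), define H_α(θ) = [sinc(δθ)/sinc(θ)]·[sinc(αθ)/sinc(θ)]^(α/δ), where sinc(x) = sin(x)/x. Then ln H_α(θ)/α = 2·Σ_{n=1}^∞ [ζ(2n)/(2n·π^(2n))]·(Σ_{k=0}^{2n−1}(α^k + δ^k))·θ^(2n), and this quantity is at most ln H_1(θ), where H_1(θ) = exp(1 − cosθ/sinc(θ))/sinc(θ). -/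
open Real

/-- `sinc x = sin x / x` with `sinc 0 = 1`. -/
noncomputable def sinc (x : ℝ) : ℝ := if x = 0 then 1 else Real.sin x / x

/-- `ζ(n)` as a real number (for even integer arguments `ζ` is real). -/
noncomputable def zetaR (n : ℕ) : ℝ := (riemannZeta (n : ℂ)).re

lemma my_summable_one_div (p : ℕ) (hp : 2 ≤ p) :
    Summable (fun n : ℕ => 1 / ((n : ℝ) + 1) ^ p) := by
  have h := Real.summable_one_div_nat_pow.mpr (by omega : 1 < p)
  have := (summable_nat_add_iff 1).mpr h
  refine this.congr fun n => ?_
  push_cast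
  ring

lemma hzeta (p : ℕ) (hp : 2 ≤ p) :
    HasSum (fun n : ℕ => 1 / ((n : ℝ) + 1) ^ p) (zetaR p) := by
  have hs := my_summable_one_div p hp
  have h1 : HasSum (fun n : ℕ => 1 / ((n : ℝ) + 1) ^ p) (∑' n : ℕ, 1 / ((n : ℝ) + 1) ^ p) :=
    hs.hasSum
  have h2 : riemannZeta p = ((∑' n : ℕ, 1 / ((n : ℝ) + 1) ^ p : ℝ) : ℂ) := by
    rw [zeta_eq_tsum_one_div_nat_add_one_cpow (by
      simp only [Complex.natCast_re]; exact_mod_cast lt_of_lt_of_le one_lt_two (by exact_mod_cast hp))]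
    rw [Complex.ofReal_tsum]
    congr 1
    ext n
    rw [Complex.cpow_natCast]
    push_cast
    ring
  have h3 : zetaR p = ∑' n : ℕ, 1 / ((n : ℝ) + 1) ^ p := by
    rw [zetaR, h2, Complex.ofReal_re]
  rwa [h3]

lemma sinc_pos {y : ℝ} (h1 : 0 < y) (h2 : y < π) : 0 < _root_.sinc y := by
  rw [_root_.sinc, if_neg h1.ne']
  exact div_pos (Real.sin_pos_of_pos_of_lt_pi h1 h2) h1

lemma key (x : ℝ) (hx0 : 0 < x) (hx1 : x < 1) :
    HasSum (fun m : ℕ => zetaR (2 * (m + 1)) / (m + 1) * x ^ (2 * (m + 1)))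
      (-Real.log (_root_.sinc (π * x))) := by
  set t : ℕ → ℝ := fun j => x ^ 2 / ((j : ℝ) + 1) ^ 2 with ht
  have hx2 : x ^ 2 < 1 := by nlinarith
  have hj1 : ∀ j : ℕ, (1 : ℝ) ≤ ((j : ℝ) + 1) ^ 2 := fun j => by
    nlinarith [Nat.cast_nonneg (α := ℝ) j]
  have htpos : ∀ j : ℕ, 0 < t j := fun j => div_pos (by positivity) (by positivity)
  have htle : ∀ j : ℕ, t j ≤ x ^ 2 := fun j => by
    rw [ht]
    calc x ^ 2 / ((j : ℝ) + 1) ^ 2 ≤ x ^ 2 / 1 :=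
          div_le_div_of_nonneg_left (by positivity) one_pos (hj1 j)
      _ = x ^ 2 := div_one _
  have htlt : ∀ j : ℕ, t j < 1 := fun j => lt_of_le_of_lt (htle j) hx2
  set f : ℕ → ℕ → ℝ := fun j m => (t j) ^ (m + 1) / (m + 1) with hf
  have hfnn : ∀ j m, 0 ≤ f j m := fun j m => by
    have := htpos j; positivity
  -- row sums : geometric-log series
  have hrow : ∀ j : ℕ, HasSum (f j) (-Real.log (1 - t j)) := fun j =>
    hasSum_pow_div_log_of_abs_lt_one (by rw [abs_of_pos (htpos j)]; exact htlt j)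
  -- column sums : zeta values
  have hcol : ∀ m : ℕ, HasSum (fun j => f j m)
      (zetaR (2 * (m + 1)) / (m + 1) * x ^ (2 * (m + 1))) := by
    intro m
    have h := (hzeta (2 * (m + 1)) (by omega)).mul_left (x ^ (2 * (m + 1)) / ((m : ℝ) + 1))
    have hfun : (fun j : ℕ => x ^ (2 * (m + 1)) / ((m : ℝ) + 1) *
        (1 / ((j : ℝ) + 1) ^ (2 * (m + 1)))) = fun j => f j m := by
      funext j
      rw [hf, ht]
      simp only [div_pow, ← pow_mul]
      rw [show 2 * (m + 1) = (m + 1) * 2 from by ring]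
      field_simp
    rw [hfun] at h
    rw [show zetaR (2 * (m + 1)) / (↑m + 1) * x ^ (2 * (m + 1)) =
        x ^ (2 * (m + 1)) / ((m : ℝ) + 1) * zetaR (2 * (m + 1)) from by ring]
    exact h
  -- bound for row sums
  have hrow_le : ∀ j, -Real.log (1 - t j) ≤ x ^ 2 / (1 - x ^ 2) * (1 / ((j : ℝ) + 1) ^ 2) := by
    intro j
    have h1 : 0 < 1 - t j := by linarith [htlt j]
    have h3 := Real.log_le_sub_one_of_pos (show (0 : ℝ) < 1 / (1 - t j) by positivity)
    rw [Real.log_div one_ne_zero h1.ne', Real.log_one] at h3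
    have h5 : t j / (1 - t j) ≤ t j / (1 - x ^ 2) :=
      div_le_div_of_nonneg_left (htpos j).le (by linarith) (by linarith [htle j])
    have h6 : t j / (1 - x ^ 2) = x ^ 2 / (1 - x ^ 2) * (1 / ((j : ℝ) + 1) ^ 2) := by
      rw [ht]; field_simp
    have h4 : 1 / (1 - t j) - 1 = t j / (1 - t j) := by field_simp; ring
    linarith [h3, h4, h5]
  have hrow_nn : ∀ j, 0 ≤ -Real.log (1 - t j) := fun j => by
    have := Real.log_nonpos (show (0:ℝ) ≤ 1 - t j by linarith [htlt j])
      (by linarith [htpos j])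
    linarith
  have hS : Summable (fun j => -Real.log (1 - t j)) :=
    Summable.of_nonneg_of_le hrow_nn hrow_le
      ((my_summable_one_div 2 le_rfl).mul_left _)
  -- identify the row-sum total with -log sinc (π x) via Euler's product
  have hπx : (0 : ℝ) < π * x := mul_pos Real.pi_pos hx0
  have hπx2 : π * x < π := by nlinarith [Real.pi_pos]
  have hsincpos := sinc_pos hπx hπx2
  have hsinc_eq : _root_.sinc (π * x) = Real.sin (π * x) / (π * x) := if_neg hπx.ne'
  have hprod : Filter.Tendsto (fun n : ℕ => ∏ j ∈ Finset.range n, (1 - t j))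
      Filter.atTop (nhds (_root_.sinc (π * x))) := by
    have he := (Real.tendsto_euler_sin_prod x).div_const (π * x)
    rw [← hsinc_eq] at he
    refine he.congr fun n => ?_
    rw [mul_comm (π * x), mul_div_assoc, div_self hπx.ne', mul_one]
  have hlogtend : Filter.Tendsto (fun n : ℕ => ∑ j ∈ Finset.range n, Real.log (1 - t j))
      Filter.atTop (nhds (Real.log (_root_.sinc (π * x)))) := by
    have hc := ((Real.continuousAt_log hsincpos.ne').tendsto.comp hprod)
    refine hc.congr fun n => ?_
    exact Real.log_prod fun j _ => by linarith [htlt j]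
  have hrowTotal : HasSum (fun j => -Real.log (1 - t j)) (-Real.log (_root_.sinc (π * x))) := by
    rw [hS.hasSum_iff_tendsto_nat]
    simpa [Finset.sum_neg_distrib] using hlogtend.neg
  -- Fubini
  have hF : Summable (fun q : ℕ × ℕ => f q.1 q.2) := by
    refine (summable_prod_of_nonneg fun q => hfnn q.1 q.2).mpr
      ⟨fun j => (hrow j).summable, hS.congr fun j => ((hrow j).tsum_eq).symm⟩
  have hFsum := hF.hasSum
  have hA : HasSum (fun j => -Real.log (1 - t j)) (∑' q : ℕ × ℕ, f q.1 q.2) :=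
    hFsum.prod_fiberwise fun j => hrow j
  have hAval : (∑' q : ℕ × ℕ, f q.1 q.2) = -Real.log (_root_.sinc (π * x)) :=
    hA.unique hrowTotal
  have hFswap : HasSum (fun q : ℕ × ℕ => f q.2 q.1) (∑' q : ℕ × ℕ, f q.1 q.2) := by
    have := (Equiv.prodComm ℕ ℕ).hasSum_iff.mpr hFsum
    exact this
  have := hFswap.prod_fiberwise fun m => hcol m
  rwa [hAval] at this

lemma zetaR_nonneg (p : ℕ) (hp : 2 ≤ p) : 0 ≤ zetaR p :=
  (hzeta p hp).nonneg fun n => by positivity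

lemma zetaR_le_two (p : ℕ) (hp : 2 ≤ p) : zetaR p ≤ 2 := by
  have h2 : zetaR 2 = π ^ 2 / 6 := by
    have : ((2 : ℕ) : ℂ) = (2 : ℂ) := by norm_num
    rw [zetaR, this, riemannZeta_two]
    simp [← Complex.ofReal_pow]
  have hle : zetaR p ≤ zetaR 2 := by
    refine hasSum_le (fun n => ?_) (hzeta p hp) (hzeta 2 le_rfl)
    have h1 : (1 : ℝ) ≤ (n : ℝ) + 1 := by linarith [Nat.cast_nonneg (α := ℝ) n]
    exact one_div_le_one_div_of_le (by positivity) (pow_le_pow_right₀ h1 hp)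
  have : π < 3.15 := Real.pi_lt_d2
  nlinarith [Real.pi_gt_three]

lemma E_hasSum (θ : ℝ) (hθ1 : 0 < θ) (hθ2 : θ < π) :
    HasSum (fun m : ℕ => 2 * zetaR (2 * (m + 1)) * (θ / π) ^ (2 * (m + 1)))
      (1 - Real.cos θ / _root_.sinc θ) := by
  have hπ := Real.pi_pos
  set r : ℝ := (θ + π) / 2 with hr
  have hr1 : θ < r := by rw [hr]; linarith
  have hr2 : r < π := by rw [hr]; linarith
  have hr0 : 0 < r := by rw [hr]; linarith
  set g : ℕ → ℝ → ℝ := fun m y => zetaR (2 * (m + 1)) / ((m : ℝ) + 1) * (y / π) ^ (2 * (m + 1))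
    with hg
  set g' : ℕ → ℝ → ℝ := fun m y => zetaR (2 * (m + 1)) / ((m : ℝ) + 1) *
      ((2 * (m + 1) : ℕ) * (y / π) ^ (2 * m + 1) * (1 / π)) with hg'
  set u : ℕ → ℝ := fun m => 4 * ((m : ℝ) + 1) * (r / π) ^ (2 * m + 1) * (1 / π) with hu
  have hq1 : r / π < 1 := (div_lt_one hπ).mpr hr2
  have hq0 : 0 < r / π := div_pos hr0 hπ
  -- summability of the bound
  have hus : Summable u := by
    have h1 : Summable (fun m : ℕ => (m : ℝ) * ((r / π) ^ 2) ^ m) := by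
      have := summable_pow_mul_geometric_of_norm_lt_one (R := ℝ) 1
        (r := (r / π) ^ 2) (by rw [Real.norm_eq_abs, abs_of_pos (by positivity)]; nlinarith)
      simpa using this
    have h2 : Summable (fun m : ℕ => ((r / π) ^ 2) ^ m) :=
      summable_geometric_of_lt_one (by positivity) (by nlinarith)
    have h3 := (h1.add h2).mul_left (4 * (r / π) * (1 / π))
    refine h3.congr fun m => ?_
    simp only [hu]
    have : (r / π) ^ (2 * m + 1) = ((r / π) ^ 2) ^ m * (r / π) := by
      rw [pow_succ, pow_mul]
    rw [this]
    ring
  -- pointwise derivatives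
  have hgderiv : ∀ m : ℕ, ∀ y : ℝ, HasDerivAt (g m) (g' m y) y := by
    intro m y
    have hd : HasDerivAt (fun y : ℝ => y / π) (1 / π) y := by
      simpa using (hasDerivAt_id y).div_const π
    have := (hd.pow (2 * (m + 1))).const_mul (zetaR (2 * (m + 1)) / ((m : ℝ) + 1))
    simpa [hg, hg', show 2 * (m + 1) - 1 = 2 * m + 1 from by omega, mul_assoc] using this
  -- bound on derivatives on Ioo (-r) r
  have hbound : ∀ m : ℕ, ∀ y ∈ Set.Ioo (-r) r, ‖g' m y‖ ≤ u m := by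
    intro m y hy
    have hya : |y| < r := abs_lt.mpr ⟨hy.1, hy.2⟩
    have hz0 := zetaR_nonneg (2 * (m + 1)) (by omega)
    have hz2 := zetaR_le_two (2 * (m + 1)) (by omega)
    have hm1 : (1 : ℝ) ≤ (m : ℝ) + 1 := by linarith [Nat.cast_nonneg (α := ℝ) m]
    have e2 : |((2 * (m + 1) : ℕ) : ℝ)| = 2 * ((m : ℝ) + 1) := by
      rw [abs_of_nonneg (by positivity)]; push_cast; ring
    have e3 : |(y / π) ^ (2 * m + 1)| ≤ (r / π) ^ (2 * m + 1) := by
      rw [abs_pow, abs_div, abs_of_pos hπ]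
      gcongr
    have e4 : |(1 : ℝ) / π| = 1 / π := abs_of_pos (by positivity)
    have e1 : |zetaR (2 * (m + 1)) / ((m : ℝ) + 1)| ≤ 2 / ((m : ℝ) + 1) := by
      rw [abs_of_nonneg (by positivity)]
      gcongr
    have hXnn : (0 : ℝ) ≤ (r / π) ^ (2 * m + 1) := pow_nonneg hq0.le (2 * m + 1)
    simp only [hg', hu]
    rw [Real.norm_eq_abs, abs_mul, abs_mul, abs_mul, e2, e4]
    calc |zetaR (2 * (m + 1)) / ((m : ℝ) + 1)| *
          (2 * ((m : ℝ) + 1) * |(y / π) ^ (2 * m + 1)| * (1 / π))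
        ≤ 2 / ((m : ℝ) + 1) * (2 * ((m : ℝ) + 1) * ((r / π) ^ (2 * m + 1)) * (1 / π)) := by
          gcongr
      _ = 4 * (r / π) ^ (2 * m + 1) * (1 / π) := by
          field_simp
          ring
      _ ≤ 4 * ((m : ℝ) + 1) * (r / π) ^ (2 * m + 1) * (1 / π) := by
          nlinarith [mul_nonneg (mul_nonneg (by norm_num : (0:ℝ) ≤ 4) hXnn)
            (le_of_lt (one_div_pos.mpr hπ)), Nat.cast_nonneg (α := ℝ) m]
  -- convergence at 0
  have hg0 : Summable fun m : ℕ => g m 0 := by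
    refine summable_zero.congr fun m => ?_
    rw [hg]
    simp
  -- the tsum has the right derivative
  have HD : HasDerivAt (fun z => ∑' m, g m z) (∑' m, g' m θ) θ :=
    hasDerivAt_tsum_of_isPreconnected hus isOpen_Ioo (Convex.isPreconnected (convex_Ioo _ _))
      (fun m y _ => hgderiv m y) hbound
      (Set.mem_Ioo.mpr ⟨by linarith, hr0⟩) hg0 (Set.mem_Ioo.mpr ⟨by linarith, hr1⟩)
  -- on Ioo 0 π the tsum equals -log ∘ sinc
  have hmem : Set.Ioo (0:ℝ) π ∈ nhds θ := Ioo_mem_nhds hθ1 hθ2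
  have htsum_eq : ∀ z ∈ Set.Ioo (0:ℝ) π, -Real.log (_root_.sinc z) = ∑' m, g m z := by
    intro z hz
    have hz0 : 0 < z / π := div_pos hz.1 hπ
    have hz1 : z / π < 1 := (div_lt_one hπ).mpr hz.2
    have hk := key (z / π) hz0 hz1
    rw [show π * (z / π) = z from by field_simp] at hk
    exact hk.tsum_eq.symm
  have HD2 : HasDerivAt (fun z => -Real.log (_root_.sinc z)) (∑' m, g' m θ) θ :=
    HD.congr_of_eventuallyEq (Filter.eventuallyEq_of_mem hmem htsum_eq)
  -- explicit derivative of -log sinc at θ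
  have hsinθ : 0 < Real.sin θ := Real.sin_pos_of_pos_of_lt_pi hθ1 hθ2
  have hlz : HasDerivAt Real.log θ⁻¹ θ := Real.hasDerivAt_log hθ1.ne'
  have hls : HasDerivAt (fun z => Real.log (Real.sin z)) ((Real.sin θ)⁻¹ * Real.cos θ) θ :=
    (Real.hasDerivAt_log hsinθ.ne').comp θ (Real.hasDerivAt_sin θ)
  have HD3 : HasDerivAt (fun z => Real.log z - Real.log (Real.sin z))
      (θ⁻¹ - (Real.sin θ)⁻¹ * Real.cos θ) θ := hlz.sub hls
  have HD4 : HasDerivAt (fun z => -Real.log (_root_.sinc z))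
      (θ⁻¹ - (Real.sin θ)⁻¹ * Real.cos θ) θ := by
    refine HD3.congr_of_eventuallyEq (Filter.eventuallyEq_of_mem hmem fun z hz => ?_)
    have hsz : 0 < Real.sin z := Real.sin_pos_of_pos_of_lt_pi hz.1 hz.2
    rw [_root_.sinc, if_neg hz.1.ne', Real.log_div hsz.ne' hz.1.ne']
    ring
  have hval : (∑' m, g' m θ) = θ⁻¹ - (Real.sin θ)⁻¹ * Real.cos θ := HD2.unique HD4
  -- HasSum of derivatives
  have hg'sum : HasSum (fun m => g' m θ) (θ⁻¹ - (Real.sin θ)⁻¹ * Real.cos θ) := by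
    have hsummable : Summable (fun m => g' m θ) :=
      Summable.of_norm_bounded hus fun m =>
        hbound m θ (Set.mem_Ioo.mpr ⟨by linarith, hr1⟩)
    rw [← hval]
    exact hsummable.hasSum
  -- multiply by θ
  have hfinal := hg'sum.mul_left θ
  have hfun : (fun m => θ * g' m θ) =
      fun m : ℕ => 2 * zetaR (2 * (m + 1)) * (θ / π) ^ (2 * (m + 1)) := by
    funext m
    simp only [hg']
    push_cast
    rw [show 2 * (m + 1) = (2 * m + 1) + 1 from by ring, pow_succ]
    field_simp
    rw [show (θ / π) ^ (2 * m + 1 + 1) = (θ / π) ^ (2 * m) * (θ / π) * (θ / π) from by ring]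
    field_simp
  rw [hfun] at hfinal
  have hval2 : θ * (θ⁻¹ - (Real.sin θ)⁻¹ * Real.cos θ) = 1 - Real.cos θ / _root_.sinc θ := by
    rw [_root_.sinc, if_neg hθ1.ne']
    field_simp
  rwa [hval2] at hfinal

lemma key' (y : ℝ) (hy0 : 0 < y) (hy1 : y < π) :
    HasSum (fun m : ℕ => zetaR (2 * (m + 1)) / (m + 1) * (y / π) ^ (2 * (m + 1)))
      (-Real.log (_root_.sinc y)) := by
  have hπ := Real.pi_pos
  have h := key (y / π) (div_pos hy0 hπ) ((div_lt_one hπ).mpr hy1)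
  rwa [show π * (y / π) = y from by field_simp] at h


lemma scalar_id (α dp ap A D X Z M P : ℝ) (hα : α ≠ 0) (hδ : 1 - α ≠ 0)
    (hM : M ≠ 0) (hP : P ≠ 0) (gδ : α * D = 1 - dp) (gα : (1 - α) * A = 1 - ap) :
    (Z / M * X - Z / M * (dp * X) + α / (1 - α) * (Z / M * X - Z / M * (ap * X))) / α =
      2 * Z / (2 * M * P) * (A + D) * (X * P) := by
  have h1 : dp = 1 - α * D := by linarith
  have h2 : ap = 1 - (1 - α) * A := by linarith
  rw [h1, h2]
  field_simp
  ring

/-- For `α ∈ [1/2,1)`, `δ = 1−α`, `θ ∈ (0,π)`, with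
`H_α(θ) = (sinc(δθ)/sinc θ)·(sinc(αθ)/sinc θ)^(α/δ)`:
`ln H_α(θ)/α = 2·Σ_{n≥1} [ζ(2n)/(2n·π^(2n))]·(Σ_{k=0}^{2n−1}(α^k+δ^k))·θ^(2n)`,
and this is at most `ln H_1(θ)` where `H_1(θ) = exp(1 − cos θ/sinc θ)/sinc θ`. -/
theorem stmt17 (α θ : ℝ) (hα : α ∈ Set.Ico (1 / 2 : ℝ) 1) (hθ : θ ∈ Set.Ioo 0 π) :
    HasSum (fun n : ℕ =>
        2 * zetaR (2 * (n + 1)) / ((2 * ((n : ℝ) + 1)) * π ^ (2 * (n + 1))) *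
          (∑ k ∈ Finset.range (2 * (n + 1)), (α ^ k + (1 - α) ^ k)) * θ ^ (2 * (n + 1)))
      (Real.log ((_root_.sinc ((1 - α) * θ) / _root_.sinc θ) * (_root_.sinc (α * θ) / _root_.sinc θ) ^ (α / (1 - α))) / α) ∧
    Real.log ((_root_.sinc ((1 - α) * θ) / _root_.sinc θ) * (_root_.sinc (α * θ) / _root_.sinc θ) ^ (α / (1 - α))) / α ≤
      Real.log (Real.exp (1 - Real.cos θ / _root_.sinc θ) / _root_.sinc θ) := by
  obtain ⟨hα1, hα2⟩ := hα
  obtain ⟨hθ1, hθ2⟩ := hθ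
  have hπ := Real.pi_pos
  have hα0 : 0 < α := by linarith
  have hδ0 : 0 < 1 - α := by linarith
  have hαθ0 : 0 < α * θ := mul_pos hα0 hθ1
  have hαθπ : α * θ < π := by nlinarith
  have hδθ0 : 0 < (1 - α) * θ := mul_pos hδ0 hθ1
  have hδθπ : (1 - α) * θ < π := by nlinarith
  have hsθ := sinc_pos hθ1 hθ2
  have hsα := sinc_pos hαθ0 hαθπ
  have hsδ := sinc_pos hδθ0 hδθπ
  have h1 := key' ((1 - α) * θ) hδθ0 hδθπ
  have h2 := key' (α * θ) hαθ0 hαθπ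
  have h3 := key' θ hθ1 hθ2
  -- the combined series
  have combo := ((h3.sub h1).add ((h3.sub h2).mul_left (α / (1 - α)))).div_const α
  -- value identification
  have hval : (-Real.log (_root_.sinc θ) - -Real.log (_root_.sinc ((1 - α) * θ)) +
      α / (1 - α) * (-Real.log (_root_.sinc θ) - -Real.log (_root_.sinc (α * θ)))) / α =
      Real.log ((_root_.sinc ((1 - α) * θ) / _root_.sinc θ) *
        (_root_.sinc (α * θ) / _root_.sinc θ) ^ (α / (1 - α))) / α := by
    rw [Real.log_mul (by positivity) (by positivity), Real.log_rpow (by positivity),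
      Real.log_div hsδ.ne' hsθ.ne', Real.log_div hsα.ne' hsθ.ne']
    ring
  rw [hval] at combo
  -- function identification
  have hfeq : ∀ m : ℕ,
      (zetaR (2 * (m + 1)) / (m + 1) * (θ / π) ^ (2 * (m + 1)) -
        zetaR (2 * (m + 1)) / (m + 1) * ((1 - α) * θ / π) ^ (2 * (m + 1)) +
        α / (1 - α) * (zetaR (2 * (m + 1)) / (m + 1) * (θ / π) ^ (2 * (m + 1)) -
          zetaR (2 * (m + 1)) / (m + 1) * (α * θ / π) ^ (2 * (m + 1)))) / α =
      2 * zetaR (2 * (m + 1)) / ((2 * ((m : ℝ) + 1)) * π ^ (2 * (m + 1))) *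
          (∑ k ∈ Finset.range (2 * (m + 1)), (α ^ k + (1 - α) ^ k)) * θ ^ (2 * (m + 1)) := by
    intro m
    set p := 2 * (m + 1) with hp
    have gδ : α * (∑ k ∈ Finset.range p, (1 - α) ^ k) = 1 - (1 - α) ^ p := by
      have h := geom_sum_mul (1 - α) p
      linear_combination -h
    have gα : (1 - α) * (∑ k ∈ Finset.range p, α ^ k) = 1 - α ^ p := by
      have h := geom_sum_mul α p
      linear_combination -h
    have hsplit : (∑ k ∈ Finset.range p, (α ^ k + (1 - α) ^ k)) =
        (∑ k ∈ Finset.range p, α ^ k) + (∑ k ∈ Finset.range p, (1 - α) ^ k) :=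
      Finset.sum_add_distrib
    have hδp : ((1 - α) * θ / π) ^ p = (1 - α) ^ p * (θ / π) ^ p := by
      rw [mul_div_assoc, mul_pow]
    have hαp : (α * θ / π) ^ p = α ^ p * (θ / π) ^ p := by
      rw [mul_div_assoc, mul_pow]
    have hθp : θ ^ p = (θ / π) ^ p * π ^ p := by
      rw [div_pow, div_mul_cancel₀]
      positivity
    have hm1 : ((m : ℝ) + 1) ≠ 0 := by positivity
    have hPne : (π : ℝ) ^ p ≠ 0 := by positivity
    rw [hδp, hαp, hθp, hsplit, show (2 * ((m : ℝ) + 1)) * π ^ p = 2 * ((m : ℝ) + 1) * π ^ p from rfl]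
    exact scalar_id α ((1 - α) ^ p) (α ^ p) _ _ ((θ / π) ^ p) (zetaR p) ((m : ℝ) + 1) (π ^ p)
      hα0.ne' hδ0.ne' hm1 hPne gδ gα
  rw [show (fun m : ℕ =>
      (zetaR (2 * (m + 1)) / (m + 1) * (θ / π) ^ (2 * (m + 1)) -
        zetaR (2 * (m + 1)) / (m + 1) * ((1 - α) * θ / π) ^ (2 * (m + 1)) +
        α / (1 - α) * (zetaR (2 * (m + 1)) / (m + 1) * (θ / π) ^ (2 * (m + 1)) -
          zetaR (2 * (m + 1)) / (m + 1) * (α * θ / π) ^ (2 * (m + 1)))) / α) =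
      fun m : ℕ => 2 * zetaR (2 * (m + 1)) / ((2 * ((m : ℝ) + 1)) * π ^ (2 * (m + 1))) *
          (∑ k ∈ Finset.range (2 * (m + 1)), (α ^ k + (1 - α) ^ k)) * θ ^ (2 * (m + 1))
    from funext hfeq] at combo
  refine ⟨combo, ?_⟩
  -- inequality part
  have hE := E_hasSum θ hθ1 hθ2
  have hRHS := hE.add h3
  have hRHSval : (1 - Real.cos θ / _root_.sinc θ) + -Real.log (_root_.sinc θ) =
      Real.log (Real.exp (1 - Real.cos θ / _root_.sinc θ) / _root_.sinc θ) := by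
    rw [Real.log_div (Real.exp_ne_zero _) hsθ.ne', Real.log_exp]
    ring
  rw [hRHSval] at hRHS
  refine hasSum_le (fun m => ?_) combo hRHS
  have hz0 := zetaR_nonneg (2 * (m + 1)) (by omega)
  have hXnn : (0 : ℝ) ≤ (θ / π) ^ (2 * (m + 1)) := by positivity
  have hθp : θ ^ (2 * (m + 1)) = (θ / π) ^ (2 * (m + 1)) * π ^ (2 * (m + 1)) := by
    rw [div_pow, div_mul_cancel₀]
    positivity
  -- bound the coefficient sum
  have hsum_le : (∑ k ∈ Finset.range (2 * (m + 1)), (α ^ k + (1 - α) ^ k)) ≤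
      2 * ((m : ℝ) + 1) + 1 := by
    rw [show 2 * (m + 1) = (2 * m + 1) + 1 from by ring, Finset.sum_range_succ']
    have hterm : ∀ k ∈ Finset.range (2 * m + 1), α ^ (k + 1) + (1 - α) ^ (k + 1) ≤ 1 := by
      intro k _
      have h1 : α ^ (k + 1) ≤ α ^ 1 := pow_le_pow_of_le_one hα0.le hα2.le (by omega)
      have h2 : (1 - α) ^ (k + 1) ≤ (1 - α) ^ 1 := pow_le_pow_of_le_one hδ0.le (by linarith) (by omega)
      simp only [pow_one] at h1 h2
      linarith
    have hb := Finset.sum_le_sum hterm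
    rw [Finset.sum_const, Finset.card_range] at hb
    simp only [nsmul_eq_mul, mul_one] at hb
    have : (α : ℝ) ^ 0 + (1 - α) ^ 0 = 2 := by norm_num
    rw [this]
    push_cast at hb ⊢
    linarith
  rw [hθp]
  have lhs_eq : 2 * zetaR (2 * (m + 1)) / ((2 * ((m : ℝ) + 1)) * π ^ (2 * (m + 1))) *
      (∑ k ∈ Finset.range (2 * (m + 1)), (α ^ k + (1 - α) ^ k)) *
      ((θ / π) ^ (2 * (m + 1)) * π ^ (2 * (m + 1))) =
      zetaR (2 * (m + 1)) / ((m : ℝ) + 1) * (θ / π) ^ (2 * (m + 1)) *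
      (∑ k ∈ Finset.range (2 * (m + 1)), (α ^ k + (1 - α) ^ k)) := by
    field_simp
  rw [lhs_eq]
  calc zetaR (2 * (m + 1)) / ((m : ℝ) + 1) * (θ / π) ^ (2 * (m + 1)) *
        (∑ k ∈ Finset.range (2 * (m + 1)), (α ^ k + (1 - α) ^ k))
      ≤ zetaR (2 * (m + 1)) / ((m : ℝ) + 1) * (θ / π) ^ (2 * (m + 1)) *
        (2 * ((m : ℝ) + 1) + 1) := by
        have hnn : (0 : ℝ) ≤ zetaR (2 * (m + 1)) / ((m : ℝ) + 1) * (θ / π) ^ (2 * (m + 1)) := by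
          positivity
        exact mul_le_mul_of_nonneg_left hsum_le hnn
    _ = 2 * zetaR (2 * (m + 1)) * (θ / π) ^ (2 * (m + 1)) +
        zetaR (2 * (m + 1)) / (m + 1) * (θ / π) ^ (2 * (m + 1)) := by
        field_simp
end
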